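/- Let X be a finite quandle, A a finite abelian group, φ : X × X → A a quandle 2-cocycle, and E = E(X,A,φ). Let β be any element of Inn(E), the subgroup of Sym(E) generated by the right translations of E. If β fixes some element (x,a) ∈ E (i.e., β(x,a) = (x,a)), then β fixes every element of the fiber {x} × A: β(x,b) = (x,b) for all b ∈ A. -/

import Mathlib

/-- A binary operation is a quandle operation: idempotent, right invertible,
and right self-distributive. -/
def IsQuandle {X : Type*} (op : X → X → X) : Prop :=
  (∀ a, op a a = a) ∧ (∀ b c, ∃! a, op a b = c) ∧
    (∀ a b c, op (op a b) c = op (op a c) (op b c))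

/-- A quandle 2-cocycle with values in a (multiplicative) abelian group. -/
def IsCocycle {X A : Type*} [CommGroup A] (op : X → X → X) (φ : X → X → A) : Prop :=
  (∀ x y z, φ x y * (φ x z)⁻¹ * φ (op x y) z * (φ (op x z) (op y z))⁻¹ = 1) ∧
    (∀ x, φ x x = 1)

/-- The operation of the abelian extension `E(X, A, φ)`:
`(x, a) * (y, b) = (x * y, a · φ(x, y))`. -/
def extOp {X A : Type*} [CommGroup A] (op : X → X → X) (φ : X → X → A) :
    X × A → X × A → X × A :=
  fun p q => (op p.1 q.1, p.2 * φ p.1 q.1)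

/-- Let `X` be a finite quandle, `A` a finite abelian group, `φ` a 2-cocycle and
`E = E(X, A, φ)`.  If `β ∈ Inn(E)` (the subgroup of `Sym(E)` generated by the right
translations `R_e`) fixes some `(x, a) ∈ E`, then `β` fixes the whole fiber `{x} × A`. -/
lemma key_aux {X A : Type*} [CommGroup A]
    (op : X → X → X) (φ : X → X → A)
    (R : X × A → Equiv.Perm (X × A)) (hR : ∀ e u : X × A, R e u = extOp op φ u e)
    (β : Equiv.Perm (X × A)) (hβ : β ∈ Subgroup.closure (Set.range R)) :
    ∀ x b, β (x, b) = ((β (x, 1)).1, (β (x, 1)).2 * b) := by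
  induction hβ using Subgroup.closure_induction with
  | mem g hg =>
      obtain ⟨e, rfl⟩ := hg
      intro x b
      simp [hR, extOp, mul_comm]
  | one => intro x b; simp
  | mul g h hg hh ihg ihh =>
      intro x b
      simp only [Equiv.Perm.mul_apply]
      rw [ihh x b, ihh x 1, ihg, ihg _ ((h (x,1)).2 * 1)]
      simp [mul_assoc]
  | inv g hg ihg =>
      intro x b
      set p := g⁻¹ (x, 1) with hp
      have hgg : g p = (x, 1) := Equiv.apply_symm_apply g (x, 1)
      have hgg' : ((g (p.1, 1)).1, (g (p.1, 1)).2 * p.2) = (x, 1) := by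
        rw [← ihg]; exact hgg
      have h1 : (g (p.1, 1)).1 = x := congrArg Prod.fst hgg'
      have h2 : (g (p.1, 1)).2 * p.2 = 1 := congrArg Prod.snd hgg'
      have h3 : g (p.1, p.2 * b) = (x, b) := by
        rw [ihg, h1, ← mul_assoc, h2, one_mul]
      have := congrArg (⇑g⁻¹) h3
      rw [show ∀ y, g⁻¹ (g y) = y from fun y => Equiv.symm_apply_apply g y] at this
      rw [← this]

theorem stmt7 {X A : Type*} [Finite X] [CommGroup A] [Finite A]
    (op : X → X → X) (hq : IsQuandle op) (φ : X → X → A) (hφ : IsCocycle op φ)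
    (R : X × A → Equiv.Perm (X × A)) (hR : ∀ e u : X × A, R e u = extOp op φ u e)
    (β : Equiv.Perm (X × A)) (hβ : β ∈ Subgroup.closure (Set.range R))
    (x : X) (a : A) (hfix : β (x, a) = (x, a)) :
    ∀ b : A, β (x, b) = (x, b) := by

  have key := key_aux op φ R hR β hβ
  have h1 := key x a
  rw [hfix] at h1
  have hx1 : (β (x, 1)).1 = x := (congrArg Prod.fst h1).symm
  have ha : (β (x, 1)).2 * a = a := (congrArg Prod.snd h1).symm
  have ha1 : (β (x, 1)).2 = 1 := mul_eq_right.mp ha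
  intro b
  rw [key x b, hx1, ha1, one_mul]
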